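/- Fix a partition of {1,…,p} into G groups (1),…,(G), τ ∈ (0,1), weights w_g > 0, and exponents α_g ∈ (1,∞), and set ε_g = (1−τ)w_g/(τ+(1−τ)w_g) and α_g* = α_g/(α_g−1). Then for every x ∈ ℝ^p, the dual of the double sparsity norm satisfies ‖x‖_ds^* := sup{⟨x,β⟩ : ‖β‖_ds ≤ 1} = max_{g ∈ {1,…,G}} ‖x_{(g)}‖_{ε_g α_g*} / (τ + (1−τ)w_g). -/

import Mathlib

open Finset

/-- The ℓ_r norm of the restriction of `x ∈ ℝ^p` to group `g` of the partition `grp`. -/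
noncomputable def groupLq {p G : ℕ} (grp : Fin p → Fin G) (r : ℝ) (g : Fin G)
    (x : Fin p → ℝ) : ℝ :=
  (∑ i ∈ Finset.univ.filter (fun i => grp i = g), |x i| ^ r) ^ (1 / r)

/-- The double sparsity norm
`‖β‖_ds = τ‖β‖₁ + (1-τ) ∑ g, w g * ‖β_{(g)}‖_{α g}`. -/
noncomputable def dsNorm {p G : ℕ} (grp : Fin p → Fin G) (τ : ℝ) (w : Fin G → ℝ)
    (α : Fin G → ℝ) (β : Fin p → ℝ) : ℝ :=
  τ * ∑ i : Fin p, |β i| + (1 - τ) * ∑ g : Fin G, w g * groupLq grp (α g) g β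

section Aux

variable {ι : Type*}

/-- Single-group upper bound: Hölder-type estimate for `τ‖·‖₁ + (1-τ)W‖·‖_a`. -/
lemma aux_upper (S : Finset ι) (τ W a t : ℝ)
    (hτ0 : 0 < τ) (hτ1 : τ < 1) (hW : 0 < W) (ha : 1 < a) (ht : 0 ≤ t)
    (x : ι → ℝ)
    (heq : ∑ i ∈ S, (max (|x i| - τ * t) 0) ^ (a / (a - 1))
        = ((1 - τ) * W * t) ^ (a / (a - 1)))
    (β : ι → ℝ) :
    ∑ i ∈ S, x i * β i
      ≤ t * (τ * ∑ i ∈ S, |β i| + (1 - τ) * W * (∑ i ∈ S, |β i| ^ a) ^ (1 / a)) := by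
  set q := a / (a - 1) with hqdef
  have hconj : a.HolderConjugate q :=
    (Real.holderConjugate_iff_eq_conjExponent ha).mpr rfl
  have hq0 : 0 < q := hconj.symm.pos
  have h1τ : (0:ℝ) < 1 - τ := by linarith
  have hWt : 0 ≤ (1 - τ) * W * t := mul_nonneg (mul_nonneg h1τ.le hW.le) ht
  have h1 : ∑ i ∈ S, x i * β i
      ≤ ∑ i ∈ S, (max (|x i| - τ * t) 0 * |β i| + τ * t * |β i|) := by
    refine Finset.sum_le_sum fun i _ => ?_
    have hxb : x i * β i ≤ |x i| * |β i| := by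
      calc x i * β i ≤ |x i * β i| := le_abs_self _
        _ = |x i| * |β i| := abs_mul _ _
    have hmax : |x i| ≤ max (|x i| - τ * t) 0 + τ * t := by
      have := le_max_left (|x i| - τ * t) (0:ℝ); linarith
    calc x i * β i ≤ |x i| * |β i| := hxb
      _ ≤ (max (|x i| - τ * t) 0 + τ * t) * |β i| :=
          mul_le_mul_of_nonneg_right hmax (abs_nonneg _)
      _ = max (|x i| - τ * t) 0 * |β i| + τ * t * |β i| := by ring
  have h2 : ∑ i ∈ S, max (|x i| - τ * t) 0 * |β i|
      ≤ ((1 - τ) * W * t) * (∑ i ∈ S, |β i| ^ a) ^ (1 / a) := by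
    have hH := Real.inner_le_Lp_mul_Lq S (fun i => max (|x i| - τ * t) 0)
      (fun i => |β i|) hconj.symm
    have hab : ∀ y : ℝ, |max y 0| = max y 0 := fun y => abs_of_nonneg (le_max_right _ _)
    simp only [hab, abs_abs] at hH
    rw [heq] at hH
    have hpow : (((1 - τ) * W * t) ^ q) ^ (1 / q) = (1 - τ) * W * t := by
      rw [← Real.rpow_mul hWt, mul_one_div, div_self hq0.ne', Real.rpow_one]
    rwa [hpow] at hH
  calc ∑ i ∈ S, x i * β i
      ≤ ∑ i ∈ S, (max (|x i| - τ * t) 0 * |β i| + τ * t * |β i|) := h1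
    _ = ∑ i ∈ S, max (|x i| - τ * t) 0 * |β i| + ∑ i ∈ S, τ * t * |β i| :=
        Finset.sum_add_distrib
    _ = ∑ i ∈ S, max (|x i| - τ * t) 0 * |β i| + τ * t * ∑ i ∈ S, |β i| := by
        rw [← Finset.mul_sum]
    _ ≤ ((1 - τ) * W * t) * (∑ i ∈ S, |β i| ^ a) ^ (1 / a) + τ * t * ∑ i ∈ S, |β i| := by
        linarith
    _ = t * (τ * ∑ i ∈ S, |β i| + (1 - τ) * W * (∑ i ∈ S, |β i| ^ a) ^ (1 / a)) := by
        ring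

/-- Single-group attainment: a maximizer for the dual problem on one group. -/
lemma aux_attain [DecidableEq ι] (S : Finset ι) (τ W a t : ℝ)
    (hτ0 : 0 < τ) (hτ1 : τ < 1) (hW : 0 < W) (ha : 1 < a) (ht : 0 < t)
    (x : ι → ℝ)
    (heq : ∑ i ∈ S, (max (|x i| - τ * t) 0) ^ (a / (a - 1))
        = ((1 - τ) * W * t) ^ (a / (a - 1))) :
    ∃ β : ι → ℝ, (∀ i, i ∉ S → β i = 0) ∧
      τ * ∑ i ∈ S, |β i| + (1 - τ) * W * (∑ i ∈ S, |β i| ^ a) ^ (1 / a) = 1 ∧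
      ∑ i ∈ S, x i * β i = t := by
  set q := a / (a - 1) with hqdef
  have hconj : a.HolderConjugate q :=
    (Real.holderConjugate_iff_eq_conjExponent ha).mpr rfl
  have ha0 : (0:ℝ) < a := hconj.pos
  have ha1 : a - 1 ≠ 0 := by linarith
  have hq1 : 1 < q := hconj.symm.lt
  have hq0 : 0 < q := by linarith
  have hqm : 0 < q - 1 := by linarith
  have h1τ : (0:ℝ) < 1 - τ := by linarith
  have hWt : 0 < (1 - τ) * W * t := mul_pos (mul_pos h1τ hW) ht
  set u : ι → ℝ := fun i => max (|x i| - τ * t) 0 with hu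
  have hu0 : ∀ i, 0 ≤ u i := fun i => le_max_right _ _
  set A := ∑ i ∈ S, u i ^ (q - 1) with hA
  have hA0 : 0 ≤ A := Finset.sum_nonneg fun i _ => Real.rpow_nonneg (hu0 i) _
  set D := τ * A + (1 - τ) * W * ((1 - τ) * W * t) ^ (q - 1) with hD
  have hD0 : 0 < D := by
    have h2 : 0 < (1 - τ) * W * ((1 - τ) * W * t) ^ (q - 1) :=
      mul_pos (mul_pos h1τ hW) (Real.rpow_pos_of_pos hWt _)
    have h3 : 0 ≤ τ * A := mul_nonneg hτ0.le hA0
    linarith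
  have hs0 : 0 < 1 / D := one_div_pos.mpr hD0
  set β : ι → ℝ := fun i => if i ∈ S then Real.sign (x i) * u i ^ (q - 1) * (1 / D) else 0
    with hβ
  have habs : ∀ i ∈ S, |β i| = u i ^ (q - 1) * (1 / D) := by
    intro i hi
    simp only [hβ, if_pos hi]
    rcases eq_or_ne (x i) 0 with h | h
    · have hu' : u i = 0 := by
        simp only [hu]
        rw [h, abs_zero, zero_sub, max_eq_right (by nlinarith [mul_pos hτ0 ht])]
      rw [hu', Real.zero_rpow hqm.ne']
      simp
    · have hsign : |Real.sign (x i)| = 1 := by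
        rcases h.lt_or_gt with hlt | hlt
        · rw [Real.sign_of_neg hlt]; norm_num
        · rw [Real.sign_of_pos hlt]; norm_num
      rw [abs_mul, abs_mul, hsign, one_mul,
        abs_of_nonneg (Real.rpow_nonneg (hu0 i) _), abs_of_nonneg hs0.le]
  have hxb : ∀ i ∈ S, x i * β i = |x i| * u i ^ (q - 1) * (1 / D) := by
    intro i hi
    simp only [hβ, if_pos hi]
    have hsx : x i * Real.sign (x i) = |x i| := by
      rcases lt_trichotomy (x i) 0 with h | h | h
      · rw [Real.sign_of_neg h, abs_of_neg h]; ring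
      · simp [h]
      · rw [Real.sign_of_pos h, abs_of_pos h]; ring
    calc x i * (Real.sign (x i) * u i ^ (q - 1) * (1 / D))
        = x i * Real.sign (x i) * u i ^ (q - 1) * (1 / D) := by ring
      _ = |x i| * u i ^ (q - 1) * (1 / D) := by rw [hsx]
  have hkey : ∀ i, |x i| * u i ^ (q - 1) = u i ^ q + τ * t * u i ^ (q - 1) := by
    intro i
    rcases le_or_gt (|x i| - τ * t) 0 with h | h
    · have hu' : u i = 0 := max_eq_right h
      rw [hu', Real.zero_rpow hqm.ne', Real.zero_rpow hq0.ne']; ring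
    · have hu' : u i = |x i| - τ * t := max_eq_left h.le
      have hup : 0 < u i := by rw [hu']; exact h
      have hq : u i ^ q = u i * u i ^ (q - 1) := by
        have h19 := Real.rpow_add hup 1 (q - 1)
        rw [show (1:ℝ) + (q - 1) = q by ring, Real.rpow_one] at h19
        exact h19
      have hx : |x i| = u i + τ * t := by rw [hu']; ring
      rw [hx, hq]; ring
  have hsum1 : ∑ i ∈ S, |β i| = A * (1 / D) := by
    rw [Finset.sum_congr rfl habs, ← Finset.sum_mul]
  have hqa : (q - 1) * a = q := by
    rw [hqdef]; field_simp; ring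
  have hqdiva : q * (1 / a) = q - 1 := by
    rw [hqdef]; field_simp; ring
  have hLa : (∑ i ∈ S, |β i| ^ a) ^ (1 / a)
      = ((1 - τ) * W * t) ^ (q - 1) * (1 / D) := by
    have h1 : ∀ i ∈ S, |β i| ^ a = u i ^ q * (1 / D) ^ a := by
      intro i hi
      rw [habs i hi, Real.mul_rpow (Real.rpow_nonneg (hu0 i) _) hs0.le,
        ← Real.rpow_mul (hu0 i), hqa]
    rw [Finset.sum_congr rfl h1, ← Finset.sum_mul, heq,
      Real.mul_rpow (Real.rpow_nonneg hWt.le _) (Real.rpow_nonneg hs0.le _),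
      ← Real.rpow_mul hWt.le, hqdiva, ← Real.rpow_mul hs0.le,
      mul_one_div_cancel ha0.ne', Real.rpow_one]
  refine ⟨β, fun i hi => by simp [hβ, hi], ?_, ?_⟩
  · rw [hsum1, hLa]
    have hid : τ * (A * (1 / D)) + (1 - τ) * W * (((1 - τ) * W * t) ^ (q - 1) * (1 / D))
        = D * (1 / D) := by rw [hD]; ring
    rw [hid, mul_one_div, div_self hD0.ne']
  · rw [Finset.sum_congr rfl hxb, ← Finset.sum_mul]
    have h2 : ∑ i ∈ S, |x i| * u i ^ (q - 1) = ((1 - τ) * W * t) ^ q + τ * t * A := by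
      rw [Finset.sum_congr rfl fun i _ => hkey i, Finset.sum_add_distrib, heq,
        ← Finset.mul_sum, ← hA]
    rw [h2]
    have h3 : ((1 - τ) * W * t) ^ q = (1 - τ) * W * t * ((1 - τ) * W * t) ^ (q - 1) := by
      have h19 := Real.rpow_add hWt 1 (q - 1)
      rw [show (1:ℝ) + (q - 1) = q by ring, Real.rpow_one] at h19
      exact h19
    have h4 : ((1 - τ) * W * t * ((1 - τ) * W * t) ^ (q - 1) + τ * t * A) * (1 / D)
        = t * (D * (1 / D)) := by rw [hD]; ring
    rw [h3, h4, mul_one_div, div_self hD0.ne', mul_one]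

end Aux

/-- **dual of the double sparsity norm.**
With `ε_g = (1-τ)w_g/(τ+(1-τ)w_g)` and `α_g* = α_g/(α_g-1)`, let `Ng g x` denote the
`(ε_g, α_g*)`-norm of the restriction of `x` to group `g` (the unique nonnegative
solution of the defining equation over the coordinates of group `g`).  Then for every
`x ∈ ℝ^p`,
`sup {⟨x,β⟩ : ‖β‖_ds ≤ 1} = max_g Ng g x / (τ + (1-τ) w_g)`. -/
theorem dsNorm_dual (p G : ℕ) (hG : 0 < G) (grp : Fin p → Fin G)
    (hsurj : Function.Surjective grp)
    (τ : ℝ) (hτ0 : 0 < τ) (hτ1 : τ < 1)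
    (w : Fin G → ℝ) (hw : ∀ g, 0 < w g)
    (α : Fin G → ℝ) (hα : ∀ g, 1 < α g)
    (Ng : Fin G → (Fin p → ℝ) → ℝ)
    (hNg0 : ∀ g x, 0 ≤ Ng g x)
    (hNgeq : ∀ (g : Fin G) (x : Fin p → ℝ),
      ∑ i ∈ Finset.univ.filter (fun i => grp i = g),
          (max (|x i| - (1 - (1 - τ) * w g / (τ + (1 - τ) * w g)) * Ng g x) 0)
            ^ (α g / (α g - 1))
        = ((1 - τ) * w g / (τ + (1 - τ) * w g) * Ng g x) ^ (α g / (α g - 1)))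
    (x : Fin p → ℝ) :
    sSup ((fun β : Fin p → ℝ => ∑ i : Fin p, x i * β i) '' {β | dsNorm grp τ w α β ≤ 1})
      = ⨆ g : Fin G, Ng g x / (τ + (1 - τ) * w g) := by
  haveI : Nonempty (Fin G) := ⟨⟨0, hG⟩⟩
  have h1τ : (0:ℝ) < 1 - τ := by linarith
  have hα0 : ∀ g, α g ≠ 0 := fun g => by have := hα g; positivity
  have hc : ∀ g, 0 < τ + (1 - τ) * w g := fun g => add_pos hτ0 (mul_pos h1τ (hw g))
  set t : Fin G → ℝ := fun g => Ng g x / (τ + (1 - τ) * w g) with htdef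
  have ht0 : ∀ g, 0 ≤ t g := fun g => div_nonneg (hNg0 g x) (hc g).le
  have hE : ∀ g, ∑ i ∈ Finset.univ.filter (fun i => grp i = g),
      (max (|x i| - τ * t g) 0) ^ (α g / (α g - 1))
      = ((1 - τ) * w g * t g) ^ (α g / (α g - 1)) := by
    intro g
    have h1 : (1 - (1 - τ) * w g / (τ + (1 - τ) * w g)) * Ng g x = τ * t g := by
      have hcne : τ + (1 - τ) * w g ≠ 0 := (hc g).ne'
      simp only [htdef]
      field_simp
      ring
    have h2 : (1 - τ) * w g / (τ + (1 - τ) * w g) * Ng g x = (1 - τ) * w g * t g := by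
      simp only [htdef]
      rw [div_mul_eq_mul_div, mul_div_assoc]
    have h := hNgeq g x
    rw [h1, h2] at h
    exact h
  have hB : ∀ (g : Fin G) (β : Fin p → ℝ),
      ∑ i ∈ Finset.univ.filter (fun i => grp i = g), x i * β i
        ≤ t g * (τ * ∑ i ∈ Finset.univ.filter (fun i => grp i = g), |β i|
            + (1 - τ) * w g * groupLq grp (α g) g β) := by
    intro g β
    have h := aux_upper (Finset.univ.filter (fun i => grp i = g)) τ (w g) (α g) (t g)
      hτ0 hτ1 (hw g) (hα g) (ht0 g) x (hE g) β
    simpa [groupLq] using h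
  have hL0 : ∀ (r : ℝ) (g : Fin G) (β : Fin p → ℝ), 0 ≤ groupLq grp r g β := fun r g β =>
    Real.rpow_nonneg (Finset.sum_nonneg fun i _ => Real.rpow_nonneg (abs_nonneg _) _) _
  have hP0 : ∀ (g : Fin G) (β : Fin p → ℝ),
      0 ≤ τ * ∑ i ∈ Finset.univ.filter (fun i => grp i = g), |β i|
          + (1 - τ) * w g * groupLq grp (α g) g β := by
    intro g β
    have h1 : 0 ≤ ∑ i ∈ Finset.univ.filter (fun i => grp i = g), |β i| :=
      Finset.sum_nonneg fun i _ => abs_nonneg _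
    have h2 := mul_nonneg (mul_nonneg h1τ.le (hw g).le) (hL0 (α g) g β)
    have h3 := mul_nonneg hτ0.le h1
    linarith
  set T := ⨆ g, t g with hT
  have hTb : ∀ g, t g ≤ T := fun g => le_ciSup (Set.finite_range t).bddAbove g
  have hT0 : 0 ≤ T := (ht0 ⟨0, hG⟩).trans (hTb ⟨0, hG⟩)
  have hfib : ∀ f : Fin p → ℝ,
      ∑ g : Fin G, ∑ i ∈ Finset.univ.filter (fun i => grp i = g), f i = ∑ i, f i :=
    fun f => Finset.sum_fiberwise_of_maps_to (fun i _ => Finset.mem_univ _) f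
  have hU : ∀ β : Fin p → ℝ, dsNorm grp τ w α β ≤ 1 → ∑ i, x i * β i ≤ T := by
    intro β hβ
    calc ∑ i, x i * β i
        = ∑ g : Fin G, ∑ i ∈ Finset.univ.filter (fun i => grp i = g), x i * β i :=
          (hfib _).symm
      _ ≤ ∑ g : Fin G, t g * (τ * ∑ i ∈ Finset.univ.filter (fun i => grp i = g), |β i|
            + (1 - τ) * w g * groupLq grp (α g) g β) :=
          Finset.sum_le_sum fun g _ => hB g β
      _ ≤ ∑ g : Fin G, T * (τ * ∑ i ∈ Finset.univ.filter (fun i => grp i = g), |β i|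
            + (1 - τ) * w g * groupLq grp (α g) g β) :=
          Finset.sum_le_sum fun g _ => mul_le_mul_of_nonneg_right (hTb g) (hP0 g β)
      _ = T * ∑ g : Fin G, (τ * ∑ i ∈ Finset.univ.filter (fun i => grp i = g), |β i|
            + (1 - τ) * w g * groupLq grp (α g) g β) := by rw [Finset.mul_sum]
      _ = T * dsNorm grp τ w α β := by
          congr 1
          rw [Finset.sum_add_distrib, dsNorm, ← Finset.mul_sum, hfib]
          congr 1
          rw [show (∑ g : Fin G, (1 - τ) * w g * groupLq grp (α g) g β)
              = (1 - τ) * ∑ g : Fin G, w g * groupLq grp (α g) g β from by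
            rw [Finset.mul_sum]; exact Finset.sum_congr rfl fun g _ => by ring]
      _ ≤ T * 1 := mul_le_mul_of_nonneg_left hβ hT0
      _ = T := mul_one T
  have hbdd : BddAbove ((fun β : Fin p → ℝ => ∑ i : Fin p, x i * β i) ''
      {β | dsNorm grp τ w α β ≤ 1}) := by
    refine ⟨T, ?_⟩
    rintro y ⟨β, hβ, rfl⟩
    exact hU β hβ
  have hzero : dsNorm grp τ w α (fun _ => 0) = 0 := by
    have hg : ∀ g : Fin G, groupLq grp (α g) g (fun _ => (0:ℝ)) = 0 := by
      intro g
      rw [groupLq]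
      rw [Finset.sum_eq_zero fun i _ => by rw [abs_zero, Real.zero_rpow (hα0 g)],
        Real.zero_rpow (one_div_ne_zero (hα0 g))]
    simp [dsNorm, hg]
  have hzmem : (0:ℝ) ∈ (fun β : Fin p → ℝ => ∑ i : Fin p, x i * β i) ''
      {β | dsNorm grp τ w α β ≤ 1} := by
    refine ⟨fun _ => 0, ?_, by simp⟩
    simp [Set.mem_setOf_eq, hzero]
  refine le_antisymm ?_ ?_
  · refine Real.sSup_le ?_ hT0
    rintro y ⟨β, hβ, rfl⟩
    exact hU β hβ
  · refine ciSup_le fun g => ?_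
    rcases eq_or_lt_of_le (ht0 g) with h0 | hpos
    · rw [← h0]
      exact le_csSup hbdd hzmem
    · obtain ⟨β, hsupp, hnorm, hval⟩ := aux_attain
        (Finset.univ.filter (fun i => grp i = g)) τ (w g) (α g) (t g)
        hτ0 hτ1 (hw g) (hα g) hpos x (hE g)
      have hl1 : ∑ i, |β i| = ∑ i ∈ Finset.univ.filter (fun i => grp i = g), |β i| := by
        symm
        refine Finset.sum_subset (Finset.filter_subset _ _) ?_
        intro i _ hi
        rw [hsupp i hi, abs_zero]
      have hLg' : ∀ g' : Fin G, g' ≠ g → groupLq grp (α g') g' β = 0 := by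
        intro g' hne
        rw [groupLq]
        have hz : ∀ i ∈ Finset.univ.filter (fun i => grp i = g'), |β i| ^ (α g') = 0 := by
          intro i hi
          have hig' : grp i = g' := (Finset.mem_filter.mp hi).2
          have hnot : i ∉ Finset.univ.filter (fun i => grp i = g) := by
            simp [Finset.mem_filter, hig', hne]
          rw [hsupp i hnot, abs_zero, Real.zero_rpow (hα0 g')]
        rw [Finset.sum_eq_zero hz, Real.zero_rpow (one_div_ne_zero (hα0 g'))]
      have hsum_g : ∑ g' : Fin G, w g' * groupLq grp (α g') g' β
          = w g * groupLq grp (α g) g β := by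
        refine Finset.sum_eq_single g (fun g' _ hne => by rw [hLg' g' hne, mul_zero]) ?_
        intro h
        exact absurd (Finset.mem_univ g) h
      have hmem : β ∈ {β | dsNorm grp τ w α β ≤ 1} := by
        show dsNorm grp τ w α β ≤ 1
        rw [dsNorm, hl1, hsum_g, ← mul_assoc]
        have hgl : groupLq grp (α g) g β
            = (∑ i ∈ Finset.univ.filter (fun i => grp i = g), |β i| ^ (α g)) ^ (1 / α g) :=
          rfl
        rw [hgl]
        exact le_of_eq hnorm
      have hvx : ∑ i, x i * β i = t g := by
        rw [← hval]
        symm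
        refine Finset.sum_subset (Finset.filter_subset _ _) ?_
        intro i _ hi
        rw [hsupp i hi, mul_zero]
      exact le_csSup hbdd ⟨β, hmem, hvx⟩
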